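/- Let ν, α ∈ ℝ with α > 0 and α > max{-ν, 0}. Then as |t| → ∞, W_ν(α + it) = O(|t|^{α + ν − 1/2} e^{−π|t|/2}), with implied constant depending on α and ν. -/

import Mathlib

open MeasureTheory Real Set Filter Asymptotics

/-- `W_ν(s) = Γ(s+ν) · ∫₀^(1/2) u^(s-1) (1-u)^(-s-ν) du`, which agrees with
`∫₀^∞ Γ(ν, 2x) e^x x^(s-1) dx` for `Re s > max (-ν) 0`. -/
noncomputable def W (ν : ℝ) (s : ℂ) : ℂ :=
  Complex.Gamma (s + (ν:ℂ)) *
    ∫ u in (0:ℝ)..(1/2 : ℝ), (u:ℂ) ^ (s - 1) * ((1:ℂ) - (u:ℂ)) ^ (-s - (ν:ℂ))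

-- L1: trivial bound on vertical strips
lemma norm_Gamma_le (z : ℂ) (hz : 0 < z.re) : ‖Complex.Gamma z‖ ≤ Real.Gamma z.re := by
  rw [Complex.Gamma_eq_integral hz, Real.Gamma_eq_integral hz, Complex.GammaIntegral]
  refine (norm_integral_le_of_norm_le (Real.GammaIntegral_convergent hz) ?_).trans le_rfl
  filter_upwards [ae_restrict_mem measurableSet_Ioi] with x (hx : (0:ℝ) < x)
  rw [norm_mul, Complex.norm_real, Real.norm_eq_abs,
    Complex.norm_cpow_eq_rpow_re_of_pos hx, abs_of_pos (Real.exp_pos _)]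
  simp [Complex.sub_re]

-- L5: norm of the weight
lemma norm_cpow_weight (z : ℂ) (hz : z ≠ 0) :
    ‖z ^ ((1/2 : ℂ) - z)‖ =
      ‖z‖ ^ (1/2 - z.re) * Real.exp (z.im * Complex.arg z) := by
  rw [Complex.norm_cpow_of_ne_zero hz]
  have : ((1/2 : ℂ) - z).re = 1/2 - z.re := by simp
  have h2 : ((1/2 : ℂ) - z).im = -z.im := by simp
  rw [this, h2, div_eq_mul_inv, ← Real.exp_neg]
  ring_nf


-- arg upper bound
lemma arg_mul_le (z : ℂ) (hz : 0 ≤ z.re) : z.im * Complex.arg z ≤ π * |z.im| / 2 := by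
  calc z.im * Complex.arg z ≤ |z.im * Complex.arg z| := le_abs_self _
    _ = |z.im| * |Complex.arg z| := abs_mul _ _
    _ ≤ |z.im| * (π/2) := by
        have := Complex.abs_arg_le_pi_div_two_iff.mpr hz
        exact mul_le_mul_of_nonneg_left this (abs_nonneg _)
    _ = π * |z.im| / 2 := by ring

lemma key_arg (z : ℂ) (hz : 0 < z.re) : π * |z.im| / 2 ≤ z.im * Complex.arg z + z.re := by
  rcases eq_or_ne z.im 0 with h0 | h0
  · simp only [h0, abs_zero, mul_zero, zero_div, zero_mul, zero_add]
    linarith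
  · have hzne : z ≠ 0 := fun h => by simp [h] at hz
    have habs : 0 < ‖z‖ := norm_pos_iff.mpr hzne
    have harg_lt : |Complex.arg z| < π / 2 := Complex.abs_arg_lt_pi_div_two_iff.mpr (Or.inl hz)
    have harg_pos : 0 < |Complex.arg z| := by
      rw [abs_pos]
      intro h
      exact h0 (Complex.arg_eq_zero_iff.mp h).2
    set x := π / 2 - |Complex.arg z| with hxdef
    have hx1 : 0 < x := by simp only [hxdef]; linarith
    have hx2 : x < π / 2 := by simp only [hxdef]; linarith
    have htan := Real.lt_tan hx1 hx2
    have hsin : Real.sin |Complex.arg z| = |z.im| / ‖z‖ := by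
      rcases abs_cases (Complex.arg z) with ⟨he, hge⟩ | ⟨he, hlt⟩
      · rw [he, Complex.sin_arg, abs_of_nonneg (Complex.arg_nonneg_iff.mp hge)]
      · rw [he, Real.sin_neg, Complex.sin_arg,
          abs_of_neg (Complex.arg_neg_iff.mp hlt), neg_div]
    have hcos : Real.cos |Complex.arg z| = z.re / ‖z‖ := by
      rw [Real.cos_abs, Complex.cos_arg hzne]
    have htx : Real.tan x = z.re / |z.im| := by
      rw [hxdef, Real.tan_eq_sin_div_cos, Real.sin_pi_div_two_sub, Real.cos_pi_div_two_sub,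
        hsin, hcos]
      field_simp
    have h5 : |z.im| * x < z.re := by
      have h6 : x < z.re / |z.im| := htan.trans_eq htx
      have h7 := mul_lt_mul_of_pos_left h6 (abs_pos.mpr h0)
      rwa [mul_div_cancel₀ _ (abs_ne_zero.mpr h0)] at h7
    have hsign : z.im * Complex.arg z = |z.im| * |Complex.arg z| := by
      rcases lt_or_gt_of_ne h0 with h | h
      · rw [abs_of_neg h, abs_of_neg (Complex.arg_neg_iff.mpr h)]
        ring
      · rw [abs_of_pos h, abs_of_nonneg (Complex.arg_nonneg_iff.mpr h.le)]
    have hsum : π * |z.im| / 2 = |z.im| * x + |z.im| * |Complex.arg z| := by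
      rw [hxdef]; ring
    rw [hsum, hsign]; have := abs_nonneg z.im; nlinarith

lemma exp_abs_le_two_cosh (y : ℝ) : Real.exp |y| ≤ 2 * Real.cosh y := by
  rw [Real.cosh_eq]
  rcases abs_cases y with ⟨h, _⟩ | ⟨h, _⟩ <;> rw [h] <;>
    [linarith [Real.exp_pos (-y)]; linarith [Real.exp_pos y]]

lemma norm_Gamma_half (z : ℂ) (hz : z.re = 1/2) :
    ‖Complex.Gamma z‖ ≤ Real.sqrt (2*π) * Real.exp (-π * |z.im| / 2) := by
  have h1 : (1:ℂ) - z = (starRingEnd ℂ) z := by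
    apply Complex.ext
    · simp [hz]; norm_num
    · simp
  have h2 : Complex.Gamma z * (starRingEnd ℂ) (Complex.Gamma z) = π / Complex.sin (π * z) := by
    rw [← Complex.Gamma_conj, ← h1, Complex.Gamma_mul_Gamma_one_sub]
  have hzz : (π : ℂ) * z = ((π/2 : ℝ) : ℂ) + ((π * z.im : ℝ) : ℂ) * Complex.I := by
    apply Complex.ext <;> simp [Complex.mul_re, Complex.mul_im, hz] <;> ring
  have hsin : Complex.sin (π * z) = Complex.cosh ((π * z.im : ℝ) : ℂ) := by
    rw [hzz, Complex.sin_add, ← Complex.cos_mul_I]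
    have : ((π/2 : ℝ) : ℂ) = (π : ℂ)/2 := by push_cast; ring
    rw [this, Complex.sin_pi_div_two, Complex.cos_pi_div_two]
    ring
  have habs : ‖Complex.sin (π * z)‖ = Real.cosh (π * z.im) := by
    rw [hsin, ← Complex.ofReal_cosh, Complex.norm_real, Real.norm_eq_abs, abs_of_pos (Real.cosh_pos _)]
  have hcosh : Real.exp (π * |z.im|) / 2 ≤ Real.cosh (π * z.im) := by
    have := exp_abs_le_two_cosh (π * z.im)
    rw [abs_mul, abs_of_pos pi_pos] at this
    linarith
  have hsq : ‖Complex.Gamma z‖ ^ 2 ≤ 2 * π * Real.exp (-(π * |z.im|)) := by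
    have h3 : (‖Complex.Gamma z‖ ^ 2 : ℝ) =
        ‖(π : ℂ) / Complex.sin (π * z)‖ := by
      rw [← h2, Complex.mul_conj, ← Complex.normSq_eq_norm_sq, Complex.norm_real, Real.norm_eq_abs,
        abs_of_nonneg (Complex.normSq_nonneg _)]
    rw [h3, norm_div, habs, Complex.norm_real, Real.norm_eq_abs, abs_of_pos pi_pos]
    rw [div_le_iff₀ (Real.cosh_pos _)]
    calc π = 2 * π * Real.exp (-(π * |z.im|)) * (Real.exp (π * |z.im|) / 2) := by
              have h : rexp (-(π * |z.im|)) * rexp (π * |z.im|) = 1 := by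
                rw [← Real.exp_add]; simp
              calc π = π * (rexp (-(π * |z.im|)) * rexp (π * |z.im|)) := by rw [h, mul_one]
                _ = 2 * π * rexp (-(π * |z.im|)) * (rexp (π * |z.im|) / 2) := by ring
      _ ≤ 2 * π * Real.exp (-(π * |z.im|)) * Real.cosh (π * z.im) := by
          apply mul_le_mul_of_nonneg_left hcosh
          positivity
  calc ‖Complex.Gamma z‖ = Real.sqrt (‖Complex.Gamma z‖ ^ 2) := by
        rw [Real.sqrt_sq (norm_nonneg _)]
    _ ≤ Real.sqrt (2 * π * Real.exp (-(π * |z.im|))) := Real.sqrt_le_sqrt hsq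
    _ = Real.sqrt (2 * π) * Real.exp (-π * |z.im| / 2) := by
        rw [Real.sqrt_mul (by positivity), ← Real.exp_half]
        ring_nf

lemma norm_Gamma_half_add (n : ℕ) (z : ℂ) (hz : z.re = 1/2) :
    ‖Complex.Gamma (z + n)‖ ≤
      Real.sqrt (2*π) * Real.exp (-π * |z.im| / 2) * ‖z + n‖ ^ n := by
  have hnn : (0:ℝ) ≤ Real.sqrt (2*π) * Real.exp (-π * |z.im| / 2) := by positivity
  induction n with
  | zero => simpa using norm_Gamma_half z hz
  | succ n ih =>
    have hre : (z + (n:ℂ)).re = 1/2 + n := by simp [hz]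
    have hcast : (0:ℝ) ≤ (n:ℝ) := Nat.cast_nonneg n
    have hne : z + (n:ℂ) ≠ 0 := by
      intro h
      have := congrArg Complex.re h
      rw [hre] at this
      simp at this
      linarith
    have hstep : Complex.Gamma (z + ((n:ℕ)+1:ℕ)) = (z + n) * Complex.Gamma (z + n) := by
      rw [show (z + ((n:ℕ)+1:ℕ) : ℂ) = (z + n) + 1 by push_cast; ring,
        Complex.Gamma_add_one _ hne]
    have hle : ‖z + (n:ℂ)‖ ≤ ‖z + ((n:ℕ)+1:ℕ)‖ := by
      have h1 : ‖z + (n:ℂ)‖ ^ 2 ≤ ‖z + ((n:ℕ)+1:ℕ)‖ ^ 2 := by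
        rw [Complex.sq_norm, Complex.sq_norm, Complex.normSq_apply, Complex.normSq_apply]
        have e2 : (z + ((n:ℕ)+1:ℕ) : ℂ).re = z.re + n + 1 := by push_cast; simp; ring
        have e4 : (z + ((n:ℕ)+1:ℕ) : ℂ).im = z.im := by push_cast; simp
        rw [Complex.add_re, Complex.add_im, e2, e4]
        simp only [Complex.natCast_re, Complex.natCast_im, add_zero]
        nlinarith [hz]
      exact (pow_le_pow_iff_left₀ (norm_nonneg _) (norm_nonneg _)
        two_ne_zero).mp h1
    calc ‖Complex.Gamma (z + ((n:ℕ)+1:ℕ))‖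
        = ‖z + n‖ * ‖Complex.Gamma (z + n)‖ := by
          rw [hstep, norm_mul]
      _ ≤ ‖z + ((n:ℕ)+1:ℕ)‖ *
          (Real.sqrt (2*π) * Real.exp (-π * |z.im| / 2) * ‖z + n‖ ^ n) := by
          apply mul_le_mul hle ih (norm_nonneg _) (norm_nonneg _)
      _ ≤ Real.sqrt (2*π) * Real.exp (-π * |z.im| / 2) *
            ‖z + ((n:ℕ)+1:ℕ)‖ ^ ((n:ℕ)+1) := by
          rw [pow_succ]
          have := pow_le_pow_left₀ (norm_nonneg _) hle n
          calc ‖z + ((n:ℕ)+1:ℕ)‖ *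
              (Real.sqrt (2*π) * Real.exp (-π * |z.im| / 2) * ‖z + n‖ ^ n)
              ≤ ‖z + ((n:ℕ)+1:ℕ)‖ *
                (Real.sqrt (2*π) * Real.exp (-π * |z.im| / 2) *
                  ‖z + ((n:ℕ)+1:ℕ)‖ ^ n) := by
                apply mul_le_mul_of_nonneg_left _ (norm_nonneg _)
                exact mul_le_mul_of_nonneg_left this hnn
            _ = Real.sqrt (2*π) * Real.exp (-π * |z.im| / 2) *
                (‖z + ((n:ℕ)+1:ℕ)‖ ^ n * ‖z + ((n:ℕ)+1:ℕ)‖) := by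
                ring

lemma phi_bound (n : ℕ) (hn : 1 ≤ n) {z : ℂ} (h1 : 1/2 ≤ z.re) (h2 : z.re ≤ 1/2 + n) :
    ‖Complex.Gamma z * z ^ ((1/2:ℂ) - z)‖ ≤ Real.sqrt (2*π) := by
  set f : ℂ → ℂ := fun w => Complex.Gamma w * w ^ ((1/2:ℂ) - w) with hf
  have hnR : (1:ℝ) ≤ (n:ℝ) := by exact_mod_cast hn
  -- differentiability
  have hd : DifferentiableOn ℂ f {w : ℂ | 0 < w.re} := by
    intro w hw
    apply DifferentiableAt.differentiableWithinAt
    have hw' : (0:ℝ) < w.re := hw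
    refine (Complex.differentiableAt_Gamma w fun m => ?_).mul
      (differentiableAt_id.cpow ((differentiableAt_const _).sub differentiableAt_id) ?_)
    · intro h
      rw [h] at hw'
      simp only [Complex.neg_re, Complex.natCast_re] at hw'
      have : (0:ℝ) ≤ m := Nat.cast_nonneg m
      linarith
    · exact Complex.mem_slitPlane_iff.mpr (Or.inl hw')
  have hsub : closure (Complex.re ⁻¹' Ioo (1/2) (1/2 + n)) ⊆ {w : ℂ | 0 < w.re} := by
    refine (closure_minimal (preimage_mono Ioo_subset_Icc_self)
      (isClosed_Icc.preimage Complex.continuous_re)).trans ?_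
    intro w hw
    exact lt_of_lt_of_le one_half_pos hw.1
  -- sup of Gamma on the compact interval
  obtain ⟨σM, hσM, hM⟩ := isCompact_Icc.exists_isMaxOn
    (nonempty_Icc.mpr (by linarith : (1/2:ℝ) ≤ 1/2 + n))
    (fun σ hσ => (Real.differentiableAt_Gamma (fun m => by
      have : (0:ℝ) ≤ m := Nat.cast_nonneg m
      intro h
      have := hσ.1
      rw [h] at this
      linarith)).continuousAt.continuousWithinAt)
  obtain ⟨M2, hM2⟩ : ∃ x : ℝ, x = max (Real.Gamma σM * 2 ^ (n:ℝ)) 1 := ⟨_, rfl⟩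
  have hM2one : (1:ℝ) ≤ M2 := hM2 ▸ le_max_right _ _
  have hM2pos : (0:ℝ) < M2 := lt_of_lt_of_le one_pos hM2one
  obtain ⟨B, hB⟩ : ∃ x : ℝ, x = Real.log M2 + π * n := ⟨_, rfl⟩
  have hlogM2 : 0 ≤ Real.log M2 := Real.log_nonneg hM2one
  have hBpos : 0 ≤ B := by
    rw [hB]
    have : (0:ℝ) ≤ π * n := by positivity
    linarith
  -- growth bound on the strip
  have hgrow : ∀ w : ℂ, w.re ∈ Ioo (1/2 : ℝ) (1/2 + n) →
      ‖f w‖ ≤ Real.exp (B * Real.exp (π / (2*n) * |w.im|)) := by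
    intro w hw
    have hwre : (0:ℝ) < w.re := lt_trans one_half_pos hw.1
    have hwne : w ≠ 0 := by
      intro h; rw [h] at hwre; simp at hwre
    have habs : (1/2 : ℝ) ≤ ‖w‖ := le_trans hw.1.le (Complex.re_le_norm w)
    have habs0 : (0:ℝ) < ‖w‖ := lt_of_lt_of_le one_half_pos habs
    have hGa : ‖Complex.Gamma w‖ ≤ Real.Gamma σM :=
      (norm_Gamma_le w hwre).trans (hM ⟨hw.1.le, hw.2.le⟩)
    have hcp : ‖w ^ ((1/2:ℂ) - w)‖ ≤ 2 ^ (n:ℝ) * Real.exp (π * |w.im| / 2) := by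
      rw [norm_cpow_weight w hwne]
      have e1 : ‖w‖ ^ (1/2 - w.re) ≤ (1/2 : ℝ) ^ (1/2 - w.re) :=
        Real.rpow_le_rpow_of_nonpos one_half_pos habs (by linarith [hw.1])
      have e2 : (1/2 : ℝ) ^ (1/2 - w.re) ≤ 2 ^ (n:ℝ) := by
        rw [show (1/2 : ℝ) = 2⁻¹ by norm_num, Real.inv_rpow (by norm_num), ← Real.rpow_neg (by norm_num)]
        apply Real.rpow_le_rpow_of_exponent_le one_le_two
        linarith [hw.2]
      have e3 : Real.exp (w.im * Complex.arg w) ≤ Real.exp (π * |w.im| / 2) :=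
        Real.exp_le_exp.mpr (arg_mul_le w hwre.le)
      exact mul_le_mul (e1.trans e2) e3 (Real.exp_pos _).le (by positivity)
    have hfw : ‖f w‖ ≤ Real.Gamma σM * 2 ^ (n:ℝ) * Real.exp (π * |w.im| / 2) := by
      simp only [hf]
      rw [norm_mul, mul_assoc]
      exact mul_le_mul hGa hcp (norm_nonneg _) ((norm_nonneg _).trans hGa)
    have key : Real.Gamma σM * 2 ^ (n:ℝ) * Real.exp (π * |w.im| / 2)
        ≤ Real.exp (B * Real.exp (π / (2*n) * |w.im|)) := by
      have step1 : Real.Gamma σM * 2 ^ (n:ℝ) ≤ M2 := hM2 ▸ le_max_left _ _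
      have step2 : Real.Gamma σM * 2 ^ (n:ℝ) * Real.exp (π * |w.im| / 2)
          ≤ M2 * Real.exp (π * |w.im| / 2) :=
        mul_le_mul_of_nonneg_right step1 (Real.exp_pos _).le
      have step3 : M2 * Real.exp (π * |w.im| / 2) = Real.exp (Real.log M2 + π * |w.im| / 2) := by
        rw [Real.exp_add, Real.exp_log hM2pos]
      have step4 : Real.log M2 + π * |w.im| / 2 ≤ B * Real.exp (π / (2*n) * |w.im|) := by
        have hexp1 : 1 + π / (2*n) * |w.im| ≤ Real.exp (π / (2*n) * |w.im|) := by
          have := Real.add_one_le_exp (π / (2*n) * |w.im|)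
          linarith
        have hc : (0:ℝ) ≤ π / (2*n) * |w.im| := by positivity
        have : B * (1 + π / (2*n) * |w.im|) ≤ B * Real.exp (π / (2*n) * |w.im|) :=
          mul_le_mul_of_nonneg_left hexp1 hBpos
        refine le_trans ?_ this
        have expand : B * (1 + π / (2*n) * |w.im|) =
            B + (Real.log M2 + π * n) * (π / (2*n)) * |w.im| := by rw [hB]; ring
        have hn0 : (0:ℝ) < n := lt_of_lt_of_le one_pos hnR
        have h6 : (π * n) * (π / (2*n)) = π^2 / 2 := by field_simp
        have h7 : π^2/2 ≥ π/2 := by nlinarith [Real.pi_gt_three]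
        have h9 : Real.log M2 * (π / (2*n)) ≥ 0 := by positivity
        have hexp2 : (Real.log M2 + π * n) * (π / (2*n)) =
            Real.log M2 * (π/(2*n)) + (π * n) * (π/(2*n)) := by ring
        have h8 : (Real.log M2 + π * n) * (π / (2*n)) ≥ π/2 := by linarith
        have h10 : (π/2) * |w.im| ≤ (Real.log M2 + π * n) * (π / (2*n)) * |w.im| :=
          mul_le_mul_of_nonneg_right h8 (abs_nonneg w.im)
        have hBge : Real.log M2 ≤ B := by
          rw [hB]
          have : (0:ℝ) ≤ π * n := by positivity
          linarith
        linarith [expand, this, h10, hBge]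
      exact step2.trans (step3.le.trans (Real.exp_le_exp.mpr step4))
    exact hfw.trans key
  -- apply Phragmén–Lindelöf
  show ‖f z‖ ≤ Real.sqrt (2*π)
  refine PhragmenLindelof.vertical_strip
    (((hd.mono hsub)).diffContOnCl) ?_ (fun w hw => ?_) (fun w hw => ?_) h1 h2
  · refine ⟨π / (2*n), ?_, B, ?_⟩
    · have hn0 : (0:ℝ) < n := lt_of_lt_of_le one_pos hnR
      rw [show (1/2 + (n:ℝ)) - 1/2 = n by ring]
      apply div_lt_div_of_pos_left Real.pi_pos hn0 ?_
      linarith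
    · refine IsBigO.of_bound 1 ?_
      rw [eventually_inf_principal]
      apply Eventually.of_forall
      intro w hw
      rw [one_mul, Real.norm_eq_abs, abs_of_pos (Real.exp_pos _)]
      exact hgrow w hw
  · -- boundary a = 1/2
    have hwne : w ≠ 0 := by
      intro h; rw [h] at hw; norm_num at hw
    simp only [hf]
    rw [norm_mul, norm_cpow_weight w hwne, hw]
    have e0 : (1/2 : ℝ) - 1/2 = 0 := by ring
    rw [e0, Real.rpow_zero, one_mul]
    calc ‖Complex.Gamma w‖ * Real.exp (w.im * Complex.arg w)
        ≤ (Real.sqrt (2*π) * Real.exp (-π * |w.im| / 2)) * Real.exp (π * |w.im| / 2) := by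
          apply mul_le_mul (norm_Gamma_half w hw)
            (Real.exp_le_exp.mpr (arg_mul_le w (by rw [hw]; norm_num)))
            (Real.exp_pos _).le (by positivity)
      _ = Real.sqrt (2*π) := by
          rw [mul_assoc, ← Real.exp_add,
            show -π * |w.im| / 2 + π * |w.im| / 2 = 0 by ring, Real.exp_zero, mul_one]
  · -- boundary b = 1/2 + n
    have hwre : (0:ℝ) < w.re := by rw [hw]; positivity
    have hwne : w ≠ 0 := by
      intro h; rw [h] at hwre; simp at hwre
    have habs0 : (0:ℝ) < ‖w‖ := by
      calc (0:ℝ) < w.re := hwre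
        _ ≤ ‖w‖ := Complex.re_le_norm w
    have hzdec : w = (w - n) + n := by ring
    have hreSub : (w - (n:ℂ)).re = 1/2 := by
      simp [Complex.sub_re, hw]
    have himSub : (w - (n:ℂ)).im = w.im := by simp
    have hga : ‖Complex.Gamma w‖ ≤
        Real.sqrt (2*π) * Real.exp (-π * |w.im| / 2) * ‖w‖ ^ n := by
      have := norm_Gamma_half_add n (w - n) hreSub
      rw [← hzdec, himSub] at this
      exact this
    simp only [hf]
    rw [norm_mul, norm_cpow_weight w hwne, hw]
    have hcollapse : ‖w‖ ^ n * ‖w‖ ^ (1/2 - (1/2 + (n:ℝ))) = 1 := by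
      rw [show (1/2 - (1/2 + (n:ℝ))) = -(n:ℝ) by ring, ← Real.rpow_natCast (‖w‖) n,
        ← Real.rpow_add habs0]
      simp
    calc ‖Complex.Gamma w‖ * (‖w‖ ^ (1/2 - (1/2 + (n:ℝ))) * Real.exp (w.im * Complex.arg w))
        ≤ (Real.sqrt (2*π) * Real.exp (-π * |w.im| / 2) * ‖w‖ ^ n) *
            (‖w‖ ^ (1/2 - (1/2 + (n:ℝ))) * Real.exp (π * |w.im| / 2)) := by
          apply mul_le_mul hga ?_ (by positivity) (by positivity)
          apply mul_le_mul_of_nonneg_left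
            (Real.exp_le_exp.mpr (arg_mul_le w hwre.le)) (Real.rpow_nonneg habs0.le _)
      _ = Real.sqrt (2*π) *
            (‖w‖ ^ n * ‖w‖ ^ (1/2 - (1/2 + (n:ℝ)))) *
            (Real.exp (-π * |w.im| / 2) * Real.exp (π * |w.im| / 2)) := by ring
      _ = Real.sqrt (2*π) := by
          rw [hcollapse, ← Real.exp_add, mul_one,
            show -π * |w.im| / 2 + π * |w.im| / 2 = 0 by ring, Real.exp_zero, mul_one]

lemma gamma_decay_ge (σ : ℝ) (hσ : 1/2 ≤ σ) : ∃ C : ℝ, 0 ≤ C ∧ ∀ t : ℝ, 1 ≤ |t| →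
    ‖Complex.Gamma (σ + t * Complex.I)‖ ≤
      C * (|t| ^ (σ - 1/2) * Real.exp (-π * |t| / 2)) := by
  refine ⟨Real.sqrt (2*π) * Real.sqrt (σ^2+1) ^ (σ - 1/2) * Real.exp σ, by positivity, ?_⟩
  intro t ht
  have hσ0 : (0:ℝ) < σ := lt_of_lt_of_le one_half_pos hσ
  set z : ℂ := σ + t * Complex.I with hz
  have hre : z.re = σ := by simp [hz]
  have him : z.im = t := by simp [hz]
  have hn1 : 1 ≤ ⌈σ⌉₊ := Nat.one_le_iff_ne_zero.mpr (by
    intro h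
    have := Nat.ceil_eq_zero.mp h
    linarith)
  have hup : σ ≤ 1/2 + (⌈σ⌉₊ : ℝ) := by
    have := Nat.le_ceil σ
    linarith
  have hphi := phi_bound ⌈σ⌉₊ hn1 (z := z) (by rw [hre]; exact hσ) (by rw [hre]; exact hup)
  have hzne : z ≠ 0 := by
    intro h
    have := congrArg Complex.re h
    rw [hre] at this
    simp at this
    linarith
  have habs0 : (0:ℝ) < ‖z‖ := by
    calc (0:ℝ) < σ := hσ0
      _ = z.re := hre.symm
      _ ≤ ‖z‖ := Complex.re_le_norm z
  rw [norm_mul, norm_cpow_weight z hzne, hre, him] at hphi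
  -- extract bound for ‖Γ z‖
  have hwpos : (0:ℝ) < ‖z‖ ^ (1/2 - σ) * Real.exp (t * Complex.arg z) := by
    positivity
  have hΓ : ‖Complex.Gamma z‖ ≤ Real.sqrt (2*π) *
      (‖z‖ ^ (σ - 1/2) * Real.exp (-(t * Complex.arg z))) := by
    have h1 := (le_div_iff₀ hwpos).mpr hphi
    have hinv : Real.sqrt (2*π) / (‖z‖ ^ (1/2 - σ) * Real.exp (t * Complex.arg z))
        = Real.sqrt (2*π) * (‖z‖ ^ (σ - 1/2) * Real.exp (-(t * Complex.arg z))) := by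
      rw [div_eq_mul_inv, mul_inv, ← Real.rpow_neg habs0.le, ← Real.exp_neg,
        show -(1/2 - σ) = σ - 1/2 by ring]
    rw [hinv] at h1
    exact h1
  -- bound the pieces
  have harg : Real.exp (-(t * Complex.arg z)) ≤ Real.exp σ * Real.exp (-π * |t| / 2) := by
    rw [← Real.exp_add]
    apply Real.exp_le_exp.mpr
    have := key_arg z (by rw [hre]; exact hσ0)
    rw [hre, him] at this
    linarith
  have habs_le : ‖z‖ ≤ Real.sqrt (σ^2+1) * |t| := by
    have h2 : ‖z‖ ^ 2 ≤ (Real.sqrt (σ^2+1) * |t|) ^ 2 := by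
      rw [Complex.sq_norm, Complex.normSq_apply, hre, him, mul_pow, Real.sq_sqrt (by positivity),
        sq_abs]
      have htt : 1 ≤ t * t := by nlinarith [abs_mul_abs_self t, abs_nonneg t]
      nlinarith [sq_nonneg σ, htt]
    have hnn : (0:ℝ) ≤ Real.sqrt (σ^2+1) * |t| := by positivity
    nlinarith [norm_nonneg z]
  have hrp : ‖z‖ ^ (σ - 1/2) ≤ (Real.sqrt (σ^2+1)) ^ (σ - 1/2) * |t| ^ (σ - 1/2) := by
    rw [← Real.mul_rpow (by positivity) (abs_nonneg t)]
    exact Real.rpow_le_rpow habs0.le habs_le (by linarith)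
  calc ‖Complex.Gamma z‖ ≤ Real.sqrt (2*π) *
      (‖z‖ ^ (σ - 1/2) * Real.exp (-(t * Complex.arg z))) := hΓ
    _ ≤ Real.sqrt (2*π) * ((Real.sqrt (σ^2+1) ^ (σ - 1/2) * |t| ^ (σ - 1/2)) *
        (Real.exp σ * Real.exp (-π * |t| / 2))) := by
        apply mul_le_mul_of_nonneg_left _ (Real.sqrt_nonneg _)
        exact mul_le_mul hrp harg (Real.exp_pos _).le (by positivity)
    _ = Real.sqrt (2*π) * Real.sqrt (σ^2+1) ^ (σ - 1/2) * Real.exp σ *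
        (|t| ^ (σ - 1/2) * Real.exp (-π * |t| / 2)) := by ring

lemma gamma_decay (σ : ℝ) (hσ : 0 < σ) : ∃ C : ℝ, 0 ≤ C ∧ ∀ t : ℝ, 1 ≤ |t| →
    ‖Complex.Gamma (σ + t * Complex.I)‖ ≤
      C * (|t| ^ (σ - 1/2) * Real.exp (-π * |t| / 2)) := by
  rcases le_or_gt (1/2 : ℝ) σ with h | h
  · exact gamma_decay_ge σ h
  · obtain ⟨C, hC0, hC⟩ := gamma_decay_ge (σ + 1) (by linarith)
    refine ⟨C, hC0, ?_⟩
    intro t ht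
    have ht0 : (0:ℝ) < |t| := lt_of_lt_of_le one_pos ht
    set z : ℂ := σ + t * Complex.I with hz
    have hre : z.re = σ := by simp [hz]
    have hzne : z ≠ 0 := by
      intro hh
      have := congrArg Complex.re hh
      rw [hre] at this
      simp at this
      linarith
    have hstep : Complex.Gamma (((σ+1 : ℝ) : ℂ) + t * Complex.I) = z * Complex.Gamma z := by
      rw [show (((σ+1 : ℝ) : ℂ) + t * Complex.I) = z + 1 by rw [hz]; push_cast; ring,
        Complex.Gamma_add_one _ hzne]
    have habs_ge : |t| ≤ ‖z‖ := by
      have := Complex.abs_im_le_norm z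
      rwa [show z.im = t by simp [hz]] at this
    have h2 := hC t ht
    rw [hstep, norm_mul] at h2
    have hG : ‖z‖ * ‖Complex.Gamma z‖ ≤
        C * (|t| ^ (σ + 1 - 1/2) * Real.exp (-π * |t| / 2)) := h2
    have hrw : |t| ^ (σ + 1 - 1/2) = |t| ^ (σ - 1/2) * |t| := by
      rw [show σ + 1 - 1/2 = (σ - 1/2) + 1 by ring, Real.rpow_add ht0, Real.rpow_one]
    have habsz : (0:ℝ) < ‖z‖ := lt_of_lt_of_le ht0 habs_ge
    have key : |t| * ‖Complex.Gamma z‖ ≤ ‖z‖ * ‖Complex.Gamma z‖ :=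
      mul_le_mul_of_nonneg_right habs_ge (norm_nonneg _)
    have : |t| * ‖Complex.Gamma z‖ ≤ C * (|t| ^ (σ - 1/2) * Real.exp (-π * |t| / 2)) * |t| := by
      rw [hrw] at hG
      calc |t| * ‖Complex.Gamma z‖ ≤ C * (|t| ^ (σ - 1/2) * |t| * Real.exp (-π * |t| / 2)) :=
            key.trans hG
        _ = C * (|t| ^ (σ - 1/2) * Real.exp (-π * |t| / 2)) * |t| := by ring
    exact le_of_mul_le_mul_right (by linarith [this]) ht0

/-- Stirling-type bound: for `α > 0`, `α > max (-ν) 0`, as `|t| → ∞`,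
`W_ν(α + it) = O(|t|^(α+ν-1/2) e^(-π|t|/2))`. -/
theorem W_isBigO (ν α : ℝ) (hα : 0 < α) (hα' : α > max (-ν) 0) :
    (fun t : ℝ => W ν ((α:ℂ) + (t:ℂ) * Complex.I))
      =O[Filter.cocompact ℝ]
        fun t : ℝ => |t| ^ (α + ν - 1/2) * Real.exp (-π * |t| / 2) := by
  have hσ : 0 < α + ν := by
    have := lt_of_le_of_lt (le_max_left (-ν) 0) hα'
    linarith
  obtain ⟨C, hC0, hC⟩ := gamma_decay (α + ν) hσ
  -- uniform bound on the integral factor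
  set K : ℝ := |∫ u in (0:ℝ)..(1/2:ℝ), 2 ^ |α + ν| * u ^ (α - 1)| with hK
  have hKnn : 0 ≤ K := abs_nonneg _
  have hInt : ∀ t : ℝ,
      ‖∫ u in (0:ℝ)..(1/2 : ℝ), (u:ℂ) ^ (((α:ℂ) + (t:ℂ) * Complex.I) - 1) *
        ((1:ℂ) - (u:ℂ)) ^ (-((α:ℂ) + (t:ℂ) * Complex.I) - (ν:ℂ))‖ ≤ K := by
    intro t
    rw [hK]
    apply intervalIntegral.norm_integral_le_abs_of_norm_le
    · rw [uIoc_of_le (by norm_num : (0:ℝ) ≤ 1/2)]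
      filter_upwards [ae_restrict_mem measurableSet_Ioc] with u hu
      have hu0 : (0:ℝ) < u := hu.1
      have hu1 : u ≤ 1/2 := hu.2
      have h1u : (0:ℝ) < 1 - u := by linarith
      have hre1 : (((α:ℂ) + (t:ℂ) * Complex.I) - 1).re = α - 1 := by simp
      have hre2 : (-((α:ℂ) + (t:ℂ) * Complex.I) - (ν:ℂ)).re = -(α + ν) := by simp; ring
      rw [norm_mul,
        show ((1:ℂ) - (u:ℂ)) = (((1 - u : ℝ)) : ℂ) by push_cast; ring,
        Complex.norm_cpow_eq_rpow_re_of_pos hu0, Complex.norm_cpow_eq_rpow_re_of_pos h1u,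
        hre1, hre2]
      have hb1 : (1 - u) ^ (-(α + ν)) ≤ (1 - u) ^ (-|α + ν|) :=
        Real.rpow_le_rpow_of_exponent_ge h1u (by linarith) (neg_le_neg (le_abs_self _))
      have hb2 : (1 - u) ^ (-|α + ν|) ≤ (1/2 : ℝ) ^ (-|α + ν|) :=
        Real.rpow_le_rpow_of_nonpos (by norm_num) (by linarith) (neg_nonpos.mpr (abs_nonneg _))
      have hb3 : ((1:ℝ)/2) ^ (-|α + ν|) = 2 ^ |α + ν| := by
        rw [show (1/2 : ℝ) = 2⁻¹ by norm_num, Real.inv_rpow (by norm_num),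
          ← Real.rpow_neg (by norm_num), neg_neg]
      calc u ^ (α - 1) * (1 - u) ^ (-(α + ν))
          ≤ u ^ (α - 1) * (2 ^ |α + ν|) := by
            apply mul_le_mul_of_nonneg_left _ (Real.rpow_nonneg hu0.le _)
            rw [← hb3]
            exact hb1.trans hb2
        _ = 2 ^ |α + ν| * u ^ (α - 1) := by ring
    · exact (intervalIntegral.intervalIntegrable_rpow' (by linarith : (-1:ℝ) < α - 1)).const_mul _
  -- eventual bound
  have hev : ∀ᶠ t : ℝ in cocompact ℝ, 1 ≤ |t| := by
    rw [cocompact_eq_atBot_atTop]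
    refine eventually_sup.mpr ⟨?_, ?_⟩
    · filter_upwards [eventually_le_atBot (-1 : ℝ)] with t ht
      calc (1:ℝ) ≤ -t := by linarith
        _ ≤ |t| := neg_le_abs t
    · filter_upwards [eventually_ge_atTop (1 : ℝ)] with t ht
      exact ht.trans (le_abs_self t)
  refine IsBigO.of_bound (C * K) ?_
  filter_upwards [hev] with t ht
  have hcast : ((α:ℂ) + (t:ℂ) * Complex.I) + (ν:ℂ) = (((α + ν : ℝ)) : ℂ) + (t:ℂ) * Complex.I := by
    push_cast; ring
  have hnorm : ‖W ν ((α:ℂ) + (t:ℂ) * Complex.I)‖ ≤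
      ‖Complex.Gamma ((((α + ν : ℝ)) : ℂ) + (t:ℂ) * Complex.I)‖ * K := by
    rw [W, hcast, norm_mul]
    exact mul_le_mul_of_nonneg_left (hInt t) (norm_nonneg _)
  have hG := hC t ht
  have htarget : ‖|t| ^ (α + ν - 1/2) * Real.exp (-π * |t| / 2)‖ =
      |t| ^ (α + ν - 1/2) * Real.exp (-π * |t| / 2) := by
    rw [Real.norm_eq_abs, abs_of_nonneg (by positivity)]
  rw [htarget]
  calc ‖W ν ((α:ℂ) + (t:ℂ) * Complex.I)‖
      ≤ ‖Complex.Gamma ((((α + ν : ℝ)) : ℂ) + (t:ℂ) * Complex.I)‖ * K := hnorm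
    _ ≤ (C * (|t| ^ (α + ν - 1/2) * Real.exp (-π * |t| / 2))) * K :=
        mul_le_mul_of_nonneg_right hG hKnn
    _ = C * K * (|t| ^ (α + ν - 1/2) * Real.exp (-π * |t| / 2)) := by ring
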